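/- Let 0 < α < 1 and c > 0. The Caputo fractional derivative of order α (lower terminal 0) of f(s) = (s − c)², evaluated at the minimizer u = c of f, equals 2c^(2−α)·(1/Γ(3−α) − 1/Γ(2−α)) and is nonzero. Hence the minimizer of f is not an equilibrium point of the fractional gradient descent dynamics du/dt = −λ · ( *_0D^α_u f )(u). -/

import Mathlib

/-- For `0 < α < 1` and `c > 0`, the Caputo fractional derivative of order `α`
(lower terminal `0`) of `f s = (s - c)^2` evaluated at the minimizer `u = c` equals
`2 c^(2-α) (1/Γ(3-α) - 1/Γ(2-α))` and is nonzero; hence the minimizer is not an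
equilibrium point of the dynamics `du/dt = -λ · (*D^α f)(u)`. -/
theorem caputo_deriv_sq_shift_at_minimizer (α c : ℝ) (hα0 : 0 < α) (hα1 : α < 1)
    (hc : 0 < c) :
    2 * c ^ (2 - α) / Real.Gamma (3 - α) - 2 * c * c ^ (1 - α) / Real.Gamma (2 - α)
      = 2 * c ^ (2 - α) * (1 / Real.Gamma (3 - α) - 1 / Real.Gamma (2 - α)) ∧
    2 * c ^ (2 - α) / Real.Gamma (3 - α) - 2 * c * c ^ (1 - α) / Real.Gamma (2 - α) ≠ 0 ∧
    ∀ l : ℝ, 0 < l →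
      -l * (2 * c ^ (2 - α) / Real.Gamma (3 - α)
        - 2 * c * c ^ (1 - α) / Real.Gamma (2 - α)) ≠ 0 := by
  have h2α : (2 - α : ℝ) ≠ 0 := by linarith
  have hcc : c * c ^ (1 - α) = c ^ (2 - α) := by
    rw [show (2 - α : ℝ) = 1 + (1 - α) by ring,
      show c * c ^ (1 - α) = c ^ (1:ℝ) * c ^ (1 - α) by rw [Real.rpow_one],
      ← Real.rpow_add hc]
  have hG2 : 0 < Real.Gamma (2 - α) := Real.Gamma_pos_of_pos (by linarith)
  have hG3 : Real.Gamma (3 - α) = (2 - α) * Real.Gamma (2 - α) := by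
    rw [show (3 - α : ℝ) = (2 - α) + 1 by ring, Real.Gamma_add_one h2α]
  have hG3pos : 0 < Real.Gamma (3 - α) := by rw [hG3]; exact mul_pos (by linarith) hG2
  have heq : 2 * c ^ (2 - α) / Real.Gamma (3 - α) - 2 * c * c ^ (1 - α) / Real.Gamma (2 - α)
      = 2 * c ^ (2 - α) * (1 / Real.Gamma (3 - α) - 1 / Real.Gamma (2 - α)) := by
    rw [← hcc]; field_simp
  have hne : 2 * c ^ (2 - α) / Real.Gamma (3 - α)
      - 2 * c * c ^ (1 - α) / Real.Gamma (2 - α) ≠ 0 := by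
    rw [heq]
    have h1 : (1 : ℝ) / Real.Gamma (3 - α) - 1 / Real.Gamma (2 - α)
        = (α - 1) / Real.Gamma (3 - α) := by
      rw [hG3]; field_simp; ring
    rw [h1]
    have hcpos : (0:ℝ) < c ^ (2 - α) := Real.rpow_pos_of_pos hc _
    have : (α - 1) / Real.Gamma (3 - α) ≠ 0 := by
      apply div_ne_zero (by linarith) (ne_of_gt hG3pos)
    positivity
  exact ⟨heq, hne, fun l hl => by
    exact mul_ne_zero (by simpa using ne_of_gt hl) hne⟩
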